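/- Let G = V^t ⋊ H be a finite group where V is a faithful irreducible H-module (H acting diagonally on V^t). A subgroup M of G is maximal and satisfies M·V^t = G if and only if M = W·H^v for some maximal H-submodule W of V^t and some v ∈ V^t (where H^v denotes the conjugate of H by v). -/

import Mathlib

namespace PaperSDP

variable {V H : Type*} [AddCommGroup V] [Group H] [DistribMulAction H V] {t : ℕ}

/-- The diagonal action of `H` on `V^t`, as a homomorphism into the
(multiplicatively written) automorphism group of `V^t`. -/
def phi (V : Type*) [AddCommGroup V] (H : Type*) [Group H] [DistribMulAction H V]
    (t : ℕ) : H →* MulAut (Multiplicative (Fin t → V)) where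
  toFun h := AddEquiv.toMultiplicative (DistribMulAction.toAddAut H (Fin t → V) h)
  map_one' := by ext v; simp
  map_mul' h₁ h₂ := by ext v; simp [mul_smul]

/-- The semidirect product `G = V^t ⋊ H` with diagonal action. -/
abbrev SDP (V : Type*) [AddCommGroup V] (H : Type*) [Group H] [DistribMulAction H V]
    (t : ℕ) : Type _ :=
  (Multiplicative (Fin t → V)) ⋊[phi V H t] H

/-- The copy of `V^t` inside `G`. -/
def VtG (V : Type*) [AddCommGroup V] (H : Type*) [Group H] [DistribMulAction H V]
    (t : ℕ) : Subgroup (SDP V H t) :=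
  (SemidirectProduct.inl : Multiplicative (Fin t → V) →* SDP V H t).range

/-- The image in `G` of an additive subgroup `W` of `V^t`. -/
def subG (W : AddSubgroup (Fin t → V)) : Subgroup (SDP V H t) :=
  (AddSubgroup.toSubgroup W).map
    (SemidirectProduct.inl : Multiplicative (Fin t → V) →* SDP V H t)

/-- The element of `G` corresponding to `v ∈ V^t`. -/
def elemG (v : Fin t → V) : SDP V H t :=
  SemidirectProduct.inl (Multiplicative.ofAdd v)

/-- The conjugate `K^v = v⁻¹ K v` of a subgroup `K ≤ G` by an element `v ∈ V^t`. -/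
def conjG (K : Subgroup (SDP V H t)) (v : Fin t → V) : Subgroup (SDP V H t) :=
  K.map (MulAut.conj (elemG v)⁻¹).toMonoidHom

/-- The copy `H^v` of `H` in `G`, conjugated by `v ∈ V^t`. -/
def HG (V : Type*) [AddCommGroup V] (H : Type*) [Group H] [DistribMulAction H V]
    (t : ℕ) (v : Fin t → V) : Subgroup (SDP V H t) :=
  conjG (SemidirectProduct.inr : H →* SDP V H t).range v

/-- `W` is an `H`-submodule of `V^t` (an `H`-invariant additive subgroup). -/
def IsHSub (H : Type*) [Group H] [DistribMulAction H V]
    (W : AddSubgroup (Fin t → V)) : Prop :=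
  ∀ (h : H) (w : Fin t → V), w ∈ W → h • w ∈ W

/-- `W` is a maximal `H`-submodule of `V^t`. -/
def IsMaxHSub (H : Type*) [Group H] [DistribMulAction H V]
    (W : AddSubgroup (Fin t → V)) : Prop :=
  IsHSub H W ∧ W ≠ ⊤ ∧ ∀ W' : AddSubgroup (Fin t → V), IsHSub H W' → W < W' → W' = ⊤

/-- The action of `H` on `V` is (faithful and) irreducible. -/
def IsIrreducible (H : Type*) [Group H] (V : Type*) [AddCommGroup V]
    [DistribMulAction H V] : Prop :=
  (⊥ : AddSubgroup V) ≠ ⊤ ∧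
    ∀ W : AddSubgroup V, (∀ (h : H) (w : V), w ∈ W → h • w ∈ W) → W = ⊥ ∨ W = ⊤

/-- The action of `H` on `V` is faithful. -/
def IsFaithful (H : Type*) [Group H] (V : Type*) [AddCommGroup V]
    [DistribMulAction H V] : Prop :=
  ∀ h : H, (∀ v : V, h • v = v) → h = 1

/-- An `End_H(V)`-subspace of `V`: an additive subgroup stable under all
`H`-equivariant additive endomorphisms of `V`. -/
def IsFSub (H : Type*) [Group H] (V : Type*) [AddCommGroup V] [DistribMulAction H V]
    (Z : AddSubgroup V) : Prop :=
  ∀ f : V →+ V, (∀ (h : H) (v : V), f (h • v) = h • f v) → ∀ z ∈ Z, f z ∈ Z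

/-- The centralizer `C_{H*}(Z)` of a subset `Z ⊆ V` (embedded diagonally in `V^t`)
in the conjugate `H* = H^g` of `H`, inside `G`. -/
def CHstar (g : SDP V H t) (Z : AddSubgroup V) : Subgroup (SDP V H t) :=
  ((SemidirectProduct.inr : H →* SDP V H t).range.map (MulAut.conj g).toMonoidHom) ⊓
    Subgroup.centralizer ((fun z : V => elemG (H := H) (fun _ : Fin t => z)) '' Z)

end PaperSDP

open PaperSDP

open scoped Pointwise

section Aux
variable {V H : Type*} [AddCommGroup V] [Group H] [DistribMulAction H V] {t : ℕ}

open SemidirectProduct Multiplicative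

/-- abbreviation for elements of the semidirect product -/
def mk' (a : Fin t → V) (h : H) : SDP V H t := ⟨Multiplicative.ofAdd a, h⟩

@[simp] lemma phi_apply (h : H) (a : Multiplicative (Fin t → V)) :
    phi V H t h a = Multiplicative.ofAdd (h • a.toAdd) := rfl

@[simp] lemma mk'_mul (a b : Fin t → V) (h k : H) :
    mk' a h * mk' b k = mk' (a + h • b) (h * k) := by
  unfold mk'; ext <;> simp [SemidirectProduct.mul_left, SemidirectProduct.mul_right]

@[simp] lemma mk'_inv (a : Fin t → V) (h : H) :
    (mk' a h)⁻¹ = mk' (-(h⁻¹ • a)) h⁻¹ := by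
  unfold mk'; ext
  · rename_i x
    show (((phi V H t) h⁻¹) (Multiplicative.ofAdd a)⁻¹).toAdd x = (Multiplicative.ofAdd (-(h⁻¹ • a))).toAdd x
    have h0 : (Multiplicative.ofAdd a)⁻¹ = Multiplicative.ofAdd (-a) := rfl
    rw [h0, phi_apply]
    simp
  · rfl

@[simp] lemma mk'_one : (mk' 0 1 : SDP V H t) = 1 := rfl

lemma eq_mk' (g : SDP V H t) : g = mk' g.left.toAdd g.right := rfl

@[simp] lemma mk'_left (a : Fin t → V) (h : H) : (mk' a h).left.toAdd = a := rfl
@[simp] lemma mk'_right (a : Fin t → V) (h : H) : (mk' a h).right = h := rfl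

lemma mk'_eq_iff {a b : Fin t → V} {h k : H} : mk' a h = mk' b k ↔ a = b ∧ h = k := by
  constructor
  · intro e
    exact ⟨by simpa using congrArg (fun g : SDP V H t => g.left.toAdd) e,
      congrArg SemidirectProduct.right e⟩
  · rintro ⟨rfl, rfl⟩; rfl

lemma mem_VtG {g : SDP V H t} : g ∈ VtG V H t ↔ g.right = 1 := by
  constructor
  · rintro ⟨a, rfl⟩; rfl
  · intro hg; exact ⟨g.left, by rw [eq_mk' g, hg]; rfl⟩

lemma mem_subG {W : AddSubgroup (Fin t → V)} {g : SDP V H t} :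
    g ∈ subG W ↔ g.right = 1 ∧ g.left.toAdd ∈ W := by
  constructor
  · rintro ⟨a, ha, rfl⟩; exact ⟨rfl, ha⟩
  · rintro ⟨h1, h2⟩; exact ⟨g.left, h2, by rw [eq_mk' g, h1]; rfl⟩

lemma mk'_mem_subG {W : AddSubgroup (Fin t → V)} {a : Fin t → V} :
    mk' a (1 : H) ∈ subG W ↔ a ∈ W := by
  simp [mem_subG]

lemma elemG_eq (v : Fin t → V) : (elemG v : SDP V H t) = mk' v 1 := rfl

lemma conj_inr (v : Fin t → V) (h : H) :
    (elemG v)⁻¹ * (inr h : SDP V H t) * elemG v = mk' (h • v - v) h := by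
  have h1 : (inr h : SDP V H t) = mk' 0 h := rfl
  rw [h1, elemG_eq, mk'_inv, mk'_mul, mk'_mul, mk'_eq_iff]
  refine ⟨?_, by group⟩
  simp [sub_eq_add_neg, add_comm]

lemma conj_apply (v : Fin t → V) (x : SDP V H t) :
    (MulEquiv.toMonoidHom (MulAut.conj (elemG v)⁻¹)) x = (elemG v)⁻¹ * x * elemG v := by
  simp [MulAut.conj_apply]

lemma mem_HG {v : Fin t → V} {g : SDP V H t} :
    g ∈ HG V H t v ↔ g = mk' (g.right • v - v) g.right := by
  constructor
  · rintro ⟨-, ⟨h, rfl⟩, rfl⟩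
    rw [conj_apply, conj_inr]
    simp [mk'_eq_iff]
  · intro hg
    refine ⟨inr g.right, ⟨g.right, rfl⟩, ?_⟩
    rw [conj_apply, conj_inr, ← hg]

lemma mk'_mem_HG {v : Fin t → V} (h : H) : mk' (h • v - v) h ∈ HG V H t v := by
  rw [mem_HG]; simp

variable (v : Fin t → V)

/-- The subgroup `W ⋊ H^v` described explicitly. -/
def WHv (W : AddSubgroup (Fin t → V)) (hW : IsHSub H W) (v : Fin t → V) :
    Subgroup (SDP V H t) where
  carrier := {g | g.left.toAdd - (g.right • v - v) ∈ W}
  one_mem' := by simpa using W.zero_mem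
  mul_mem' := by
    rintro a b ha hb
    have key : (a * b).left.toAdd - ((a * b).right • v - v) =
        (a.left.toAdd - (a.right • v - v)) + a.right • (b.left.toAdd - (b.right • v - v)) := by
      have h1 : (a * b).left.toAdd = a.left.toAdd + a.right • b.left.toAdd := rfl
      have h2 : (a * b).right = a.right * b.right := rfl
      rw [h1, h2, mul_smul]
      simp only [smul_sub, smul_add]
      abel
    simp only [Set.mem_setOf_eq] at *
    rw [key]
    exact W.add_mem ha (hW a.right _ hb)
  inv_mem' := by
    intro a ha
    simp only [Set.mem_setOf_eq] at *
    have key : a⁻¹.left.toAdd - (a⁻¹.right • v - v) =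
        -(a.right⁻¹ • (a.left.toAdd - (a.right • v - v))) := by
      have h1 : a⁻¹.left.toAdd = a.right⁻¹ • (-a.left.toAdd) := rfl
      have h2 : a⁻¹.right = a.right⁻¹ := rfl
      rw [h1, h2]
      simp only [smul_sub, smul_neg, neg_sub, sub_neg_eq_add]
      rw [inv_smul_smul]
      abel
    rw [key]
    exact W.neg_mem (hW _ _ ha)

lemma mem_WHv {W : AddSubgroup (Fin t → V)} {hW : IsHSub H W} {g : SDP V H t} :
    g ∈ WHv W hW v ↔ g.left.toAdd - (g.right • v - v) ∈ W := Iff.rfl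

lemma mk'_mem_WHv {W : AddSubgroup (Fin t → V)} {hW : IsHSub H W} {a : Fin t → V} {h : H} :
    mk' a h ∈ WHv W hW v ↔ a - (h • v - v) ∈ W := Iff.rfl

lemma join_eq (W : AddSubgroup (Fin t → V)) (hW : IsHSub H W) :
    subG W ⊔ HG V H t v = WHv W hW v := by
  apply le_antisymm
  · refine sup_le ?_ ?_
    · intro g hg
      rw [mem_subG] at hg
      rw [mem_WHv, hg.1]
      simpa using hg.2
    · intro g hg
      rw [mem_HG] at hg
      rw [mem_WHv]
      have := congrArg (fun x : SDP V H t => x.left.toAdd) hg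
      simp only [mk'_left] at this
      rw [this]
      simpa using W.zero_mem
  · intro g hg
    rw [mem_WHv] at hg
    have : g = mk' (g.left.toAdd - (g.right • v - v)) 1 * mk' (g.right • v - v) g.right := by
      conv_lhs => rw [eq_mk' g]
      rw [mk'_mul, mk'_eq_iff]
      constructor
      · simp
      · simp
    rw [this]
    exact Subgroup.mul_mem _
      (Subgroup.mem_sup_left (mk'_mem_subG.2 hg))
      (Subgroup.mem_sup_right (mk'_mem_HG _))

lemma WHv_sup_VtG (W : AddSubgroup (Fin t → V)) (hW : IsHSub H W) :
    WHv W hW v ⊔ VtG V H t = ⊤ := by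
  rw [eq_top_iff]
  intro g _
  have : g = mk' (g.right • v - v) g.right * mk' (g.right⁻¹ • (g.left.toAdd - (g.right • v - v))) 1 := by
    conv_lhs => rw [eq_mk' g]
    rw [mk'_mul, mk'_eq_iff]
    refine ⟨?_, by group⟩
    rw [smul_inv_smul]
    abel
  rw [this]
  refine Subgroup.mul_mem _ (Subgroup.mem_sup_left ?_) (Subgroup.mem_sup_right ?_)
  · rw [mk'_mem_WHv]; simpa using W.zero_mem
  · rw [mem_VtG]; rfl

/-- The additive subgroup of `V^t` whose image lies in `K`. -/
def pullW (K : Subgroup (SDP V H t)) : AddSubgroup (Fin t → V) where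
  carrier := {a | mk' a (1 : H) ∈ K}
  zero_mem' := by simpa using K.one_mem
  add_mem' := by
    intro a b ha hb
    have := K.mul_mem ha hb
    rw [mk'_mul, one_smul, mul_one] at this
    exact this
  neg_mem' := by
    intro a ha
    have := K.inv_mem ha
    rw [mk'_inv, inv_one, one_smul] at this
    exact this

lemma mem_pullW {K : Subgroup (SDP V H t)} {a : Fin t → V} :
    a ∈ pullW K ↔ mk' a (1 : H) ∈ K := Iff.rfl

lemma conj_mk' (b a : Fin t → V) (h : H) :
    mk' b h * mk' a 1 * (mk' b h)⁻¹ = mk' (h • a) 1 := by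
  rw [mk'_inv, mk'_mul, mk'_mul, mk'_eq_iff]
  constructor
  · simp only [mul_one, smul_neg, smul_inv_smul]
    abel
  · group

lemma mul_inv_aux (a : Fin t → V) (h : H) (v : Fin t → V) :
    mk' a h * (mk' (h • v - v) h)⁻¹ = mk' (a - (h • v - v)) 1 := by
  rw [mk'_inv, mk'_mul, mk'_eq_iff]
  constructor
  · simp only [smul_neg, smul_inv_smul]
    abel
  · group

lemma isCoatom_WHv (W : AddSubgroup (Fin t → V)) (hmax : IsMaxHSub H W)
    (v : Fin t → V) : IsCoatom (WHv W hmax.1 v) := by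
  constructor
  · intro htop
    obtain ⟨a, ha⟩ : ∃ a, a ∉ W := by
      by_contra hc
      push_neg at hc
      exact hmax.2.1 ((AddSubgroup.eq_top_iff' W).2 hc)
    have : mk' a (1 : H) ∈ WHv W hmax.1 v := htop ▸ Subgroup.mem_top _
    rw [mk'_mem_WHv] at this
    simp only [one_smul, sub_self, sub_zero] at this
    exact ha this
  · intro K hK
    have hKv : ∀ h : H, mk' (h • v - v) h ∈ K := by
      intro h
      refine hK.le ?_
      rw [mk'_mem_WHv]
      simpa using W.zero_mem
    have hU : IsHSub H (pullW K) := by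
      intro h a ha
      rw [mem_pullW] at ha ⊢
      have := K.mul_mem (K.mul_mem (hKv h) ha) (K.inv_mem (hKv h))
      rwa [conj_mk'] at this
    have hWU : W ≤ pullW K := by
      intro w hw
      rw [mem_pullW]
      refine hK.le ?_
      rw [mk'_mem_WHv]
      simpa using hw
    obtain ⟨g, hgK, hgM⟩ := SetLike.exists_of_lt hK
    have hd : g.left.toAdd - (g.right • v - v) ∈ pullW K := by
      rw [mem_pullW]
      have := K.mul_mem hgK (K.inv_mem (hKv g.right))
      rw [eq_mk' g] at this
      simp only [mk'_right] at this
      rwa [mul_inv_aux] at this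
    have hdW : g.left.toAdd - (g.right • v - v) ∉ W := fun hc => hgM (mem_WHv v |>.2 hc)
    have hUtop : pullW K = ⊤ :=
      hmax.2.2 _ hU (lt_of_le_of_ne hWU (fun e => hdW (e ▸ hd)))
    rw [eq_top_iff]
    intro x _
    have hx : x = mk' (x.left.toAdd - (x.right • v - v)) 1 * mk' (x.right • v - v) x.right := by
      conv_lhs => rw [eq_mk' x]
      rw [mk'_mul, mk'_eq_iff]
      constructor
      · simp
      · simp
    rw [hx]
    refine K.mul_mem ?_ (hKv x.right)
    have : x.left.toAdd - (x.right • v - v) ∈ pullW K := hUtop ▸ AddSubgroup.mem_top _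
    rwa [mem_pullW] at this

section GaschutzPrep

variable (p : ℕ)

/-- Fixed points of a nontrivial normal subgroup are trivial, for a faithful
irreducible action. -/
lemma fixed_eq_zero (hfaith : IsFaithful H V) (hirr : IsIrreducible H V)
    {N : Subgroup H} (hN : N.Normal) (hNbot : N ≠ ⊥) :
    ∀ z : V, (∀ n ∈ N, n • z = z) → z = 0 := by
  set Z : AddSubgroup V :=
    { carrier := {z | ∀ n ∈ N, n • z = z}
      zero_mem' := fun n _ => smul_zero n
      add_mem' := fun {a b} ha hb n hn => by rw [smul_add, ha n hn, hb n hn]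
      neg_mem' := fun {a} ha n hn => by rw [smul_neg, ha n hn] } with hZ
  have hinv : ∀ (h : H) (z : V), z ∈ Z → h • z ∈ Z := by
    intro h z hz n hn
    have h1 : (h⁻¹ * n * h) • z = z := hz _ (by simpa using hN.conj_mem n hn h⁻¹)
    calc n • h • z = (n * h) • z := (mul_smul _ _ _).symm
      _ = (h * (h⁻¹ * n * h)) • z := by group
      _ = h • z := by rw [mul_smul, h1]
  rcases hirr.2 Z hinv with h0 | h1
  · intro z hz
    have : z ∈ Z := hz
    rwa [h0, AddSubgroup.mem_bot] at this
  · exfalso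
    apply hNbot
    rw [Subgroup.eq_bot_iff_forall]
    intro n hn
    apply hfaith
    intro w
    have : w ∈ Z := h1 ▸ AddSubgroup.mem_top w
    exact this n hn

lemma p_dvd_card_V [Finite V] (hp : p.Prime) (helem : ∀ v : V, p • v = 0)
    (hirr : IsIrreducible H V) : p ∣ Nat.card V := by
  obtain ⟨v, hv⟩ : ∃ v : V, v ≠ 0 := by
    by_contra hc
    push_neg at hc
    refine hirr.1 ?_
    ext z
    simp [hc z]
  have h1 : addOrderOf v ∣ p := addOrderOf_dvd_of_nsmul_eq_zero (helem v)
  rcases (Nat.Prime.eq_one_or_self_of_dvd hp _ h1) with h2 | h2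
  · exact absurd (AddMonoid.addOrderOf_eq_one_iff.1 h2) hv
  · exact h2 ▸ addOrderOf_dvd_natCard v

open scoped commutatorElement in
/-- In a nontrivial finite solvable group acting faithfully and irreducibly on `V`
of exponent `p`, there is a nontrivial normal subgroup of order prime to `p`. -/
lemma exists_pprime_normal [Finite V] [Finite H] [Group.IsSolvable H] (hp : p.Prime)
    (helem : ∀ v : V, p • v = 0) (hfaith : IsFaithful H V) (hirr : IsIrreducible H V)
    (hH : Nontrivial H) :
    ∃ N : Subgroup H, N.Normal ∧ N ≠ ⊥ ∧ ¬ p ∣ Nat.card N := by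
  classical
  obtain ⟨n₀, hn₀⟩ := Group.IsSolvable.solvable (G := H)
  have hP0 : ∃ n, derivedSeries H n = ⊥ := ⟨n₀, hn₀⟩
  set m := Nat.find hP0 with hm
  have hmbot : derivedSeries H m = ⊥ := Nat.find_spec hP0
  have hmne : m ≠ 0 := by
    intro h0
    have : derivedSeries H 0 = ⊥ := by rw [← h0]; exact hmbot
    simp only [derivedSeries_zero] at this
    obtain ⟨x, y, hxy⟩ := hH
    apply hxy
    have hx : x ∈ (⊥ : Subgroup H) := this ▸ Subgroup.mem_top x
    have hy : y ∈ (⊥ : Subgroup H) := this ▸ Subgroup.mem_top y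
    rw [Subgroup.mem_bot] at hx hy
    rw [hx, hy]
  -- the last nontrivial term of the derived series
  set k := m - 1 with hk
  have hmk : m = k + 1 := (Nat.succ_pred_eq_of_ne_zero hmne).symm
  set A := derivedSeries H k with hA
  have hAbot : A ≠ ⊥ := Nat.find_min hP0 (by omega)
  have hAnormal : A.Normal := derivedSeries_normal H k
  have hAcomm : ∀ a ∈ A, ∀ b ∈ A, a * b = b * a := by
    intro a ha b hb
    have : ⁅a, b⁆ ∈ derivedSeries H m := by
      rw [hmk, derivedSeries_succ]
      exact Subgroup.commutator_mem_commutator ha hb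
    rw [hmbot, Subgroup.mem_bot] at this
    exact (commutatorElement_eq_one_iff_commute.1 this).eq
  -- the p-torsion part of A
  set P : Subgroup H :=
    { carrier := {a | a ∈ A ∧ ∃ n, a ^ p ^ n = 1}
      one_mem' := ⟨A.one_mem, 0, one_pow _⟩
      mul_mem' := by
        rintro a b ⟨haA, na, hna⟩ ⟨hbA, nb, hnb⟩
        refine ⟨A.mul_mem haA hbA, na + nb, ?_⟩
        have hcomm : Commute a b := hAcomm a haA b hbA
        rw [hcomm.mul_pow, pow_add, pow_mul, hna, one_pow, one_mul, mul_comm (p ^ na),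
          pow_mul, hnb, one_pow]
      inv_mem' := by
        rintro a ⟨haA, na, hna⟩
        exact ⟨A.inv_mem haA, na, by rw [inv_pow, hna, inv_one]⟩ } with hP
  have hPnormal : P.Normal := by
    constructor
    rintro a ⟨haA, na, hna⟩ g
    refine ⟨hAnormal.conj_mem a haA g, na, ?_⟩
    rw [conj_pow, hna, mul_one, mul_inv_cancel]
  have hPgroup : IsPGroup p ↥P := by
    rintro ⟨a, haA, na, hna⟩
    exact ⟨na, by ext; simpa using hna⟩
  -- P is trivial, by the fixed point argument
  have hPbot : P = ⊥ := by
    by_contra hPbot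
    -- find a nonzero fixed vector of P
    haveI : Fact p.Prime := ⟨hp⟩
    have hfix := hPgroup.card_modEq_card_fixedPoints V
    have hdvdV : p ∣ Nat.card V := p_dvd_card_V p hp helem hirr
    have hfix0 : (0 : V) ∈ MulAction.fixedPoints ↥P V := by
      intro g
      exact smul_zero _
    have hcard : p ∣ Nat.card (MulAction.fixedPoints ↥P V) := by
      have := (Nat.modEq_zero_iff_dvd).2 hdvdV
      exact (Nat.modEq_zero_iff_dvd).1 (hfix.symm.trans this)
    obtain ⟨z, hzfix, hz0⟩ : ∃ z : V, z ∈ MulAction.fixedPoints ↥P V ∧ z ≠ 0 := by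
      by_contra hc
      push_neg at hc
      have hsub : MulAction.fixedPoints ↥P V = {0} := by
        ext z
        constructor
        · intro hz
          by_contra hz0
          exact hz0 (hc z hz)
        · rintro rfl
          exact hfix0
      have h1 : Nat.card (MulAction.fixedPoints ↥P V) = 1 := by rw [hsub]; simp
      rw [h1] at hcard
      exact absurd (Nat.le_of_dvd one_pos hcard) (not_le.2 hp.one_lt)
    exact hz0 (fixed_eq_zero hfaith hirr hPnormal hPbot z (fun n hn => hzfix ⟨n, hn⟩))
  -- hence p does not divide |A|
  refine ⟨A, hAnormal, hAbot, ?_⟩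
  intro hdvd
  haveI : Fintype ↥A := Fintype.ofFinite ↥A
  haveI : Fact p.Prime := ⟨hp⟩
  rw [Nat.card_eq_fintype_card] at hdvd
  obtain ⟨x, hx⟩ := exists_prime_orderOf_dvd_card p hdvd
  have hxP : (↑x : H) ∈ P := by
    refine ⟨x.2, 1, ?_⟩
    rw [pow_one, ← hx]
    have : x ^ orderOf x = 1 := pow_orderOf_eq_one x
    calc (↑x : H) ^ orderOf x = ↑(x ^ orderOf x) := by rfl
      _ = 1 := by rw [this]; rfl
  have hx1 : (↑x : H) ≠ 1 := by
    intro h1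
    have : x = 1 := Subtype.ext h1
    rw [this, orderOf_one] at hx
    exact hp.one_lt.ne' hx.symm
  rw [hPbot, Subgroup.mem_bot] at hxP
  exact hx1 hxP

end GaschutzPrep

section FixMod

open scoped Classical

/-- The `i`-th coordinate copy of `V` inside `V^t`. -/
def Vi (V : Type*) [AddCommGroup V] (t : ℕ) (i : Fin t) : AddSubgroup (Fin t → V) where
  carrier := {a | ∀ j, j ≠ i → a j = 0}
  zero_mem' := fun _ _ => rfl
  add_mem' := fun {a b} ha hb j hj => by rw [Pi.add_apply, ha j hj, hb j hj, add_zero]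
  neg_mem' := fun {a} ha j hj => by rw [Pi.neg_apply, ha j hj, neg_zero]

lemma smul_single (h : H) (i : Fin t) (z : V) :
    h • (Pi.single i z : Fin t → V) = (Pi.single i (h • z) : Fin t → V) := by
  funext j
  by_cases hj : j = i
  · subst hj; simp [Pi.single_eq_same]
  · simp [Pi.single_eq_of_ne hj, Pi.smul_apply]

lemma mem_Vi_eq_single {i : Fin t} {a : Fin t → V} (ha : a ∈ Vi V t i) :
    a = Pi.single i (a i) := by
  funext j
  by_cases hj : j = i
  · subst hj; simp [Pi.single_eq_same]
  · rw [ha j hj, Pi.single_eq_of_ne hj]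

/-- Congruence mod a maximal submodule: elements fixed mod `W` by a nontrivial
normal subgroup already lie in `W`. -/
lemma fixmodW (hfaith : IsFaithful H V) (hirr : IsIrreducible H V)
    {W : AddSubgroup (Fin t → V)} (hmax : IsMaxHSub H W)
    {N : Subgroup H} (hN : N.Normal) (hNbot : N ≠ ⊥) :
    ∀ x : Fin t → V, (∀ n ∈ N, n • x - x ∈ W) → x ∈ W := by
  have hVN0 := fixed_eq_zero hfaith hirr hN hNbot
  -- find a coordinate copy not contained in W
  obtain ⟨i, hi⟩ : ∃ i, ¬ Vi V t i ≤ W := by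
    by_contra hc
    push_neg at hc
    refine hmax.2.1 ?_
    rw [AddSubgroup.eq_top_iff']
    intro a
    rw [← Finset.univ_sum_single a]
    refine AddSubgroup.sum_mem W ?_
    intro j _
    refine hc j ?_
    intro j' hj'
    rw [Pi.single_eq_of_ne hj']
  -- W ⊔ Vi = ⊤
  have hVinv : IsHSub H (Vi V t i) := by
    intro h a ha j hj
    rw [Pi.smul_apply, ha j hj, smul_zero]
  have hsupinv : IsHSub H (W ⊔ Vi V t i) := by
    intro h a ha
    rw [AddSubgroup.mem_sup] at ha ⊢
    obtain ⟨y, hy, z, hz, rfl⟩ := ha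
    exact ⟨h • y, hmax.1 h y hy, h • z, hVinv h z hz, (smul_add h y z).symm⟩
  have hsup : W ⊔ Vi V t i = ⊤ := by
    refine hmax.2.2 _ hsupinv (lt_of_le_of_ne le_sup_left ?_)
    intro he
    exact hi (he ▸ le_sup_right)
  -- W ⊓ Vi = 0
  have hint : ∀ a ∈ W, a ∈ Vi V t i → a = 0 := by
    set Z : AddSubgroup V :=
      { carrier := {z | Pi.single i z ∈ W}
        zero_mem' := by
          show Pi.single i (0 : V) ∈ W
          rw [Pi.single_zero]
          exact W.zero_mem
        add_mem' := by
          intro a b ha hb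
          show Pi.single i (a + b) ∈ W
          rw [Pi.single_add]
          exact W.add_mem ha hb
        neg_mem' := by
          intro a ha
          show Pi.single i (-a) ∈ W
          rw [Pi.single_neg]
          exact W.neg_mem ha } with hZdef
    have hZinv : ∀ (h : H) (z : V), z ∈ Z → h • z ∈ Z := by
      intro h z hz
      show Pi.single i (h • z) ∈ W
      rw [← smul_single]
      exact hmax.1 h _ hz
    rcases hirr.2 Z hZinv with h0 | h1
    · intro a haW haV
      have : a i ∈ Z := by
        show Pi.single i (a i) ∈ W
        rw [← mem_Vi_eq_single haV]
        exact haW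
      rw [h0, AddSubgroup.mem_bot] at this
      rw [mem_Vi_eq_single haV, this, Pi.single_zero]
    · exfalso
      apply hi
      intro a ha
      have : a i ∈ Z := h1 ▸ AddSubgroup.mem_top (a i)
      have h2 : Pi.single i (a i) ∈ W := this
      rwa [← mem_Vi_eq_single ha] at h2
  -- main argument
  intro x hx
  have : x ∈ W ⊔ Vi V t i := hsup ▸ AddSubgroup.mem_top x
  rw [AddSubgroup.mem_sup] at this
  obtain ⟨w, hw, u, hu, rfl⟩ := this
  have hufix : ∀ n ∈ N, n • u = u := by
    intro n hn
    have h1 : n • u - u ∈ W := by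
      have h2 : n • (w + u) - (w + u) ∈ W := hx n hn
      have h3 : n • w - w ∈ W := W.sub_mem (hmax.1 n w hw) hw
      have key : n • u - u = (n • (w + u) - (w + u)) - (n • w - w) := by
        rw [smul_add]
        abel
      rw [key]
      exact W.sub_mem h2 h3
    have h4 : n • u - u ∈ Vi V t i := (Vi V t i).sub_mem (hVinv n u hu) hu
    have := hint _ h1 h4
    rwa [sub_eq_zero] at this
  have hui : u i = 0 := by
    refine hVN0 (u i) ?_
    intro n hn
    have := hufix n hn
    calc n • u i = (n • u) i := rfl
      _ = u i := by rw [this]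
  have hu0 : u = 0 := by
    rw [mem_Vi_eq_single hu, hui, Pi.single_zero]
  rw [hu0, add_zero]
  exact hw

end FixMod

section Gaschutz

/-- Gaschütz: every cocycle mod a maximal submodule is a coboundary mod it. -/
lemma exists_coboundary [Finite V] [Finite H] [Group.IsSolvable H] {p : ℕ} (hp : p.Prime)
    (helem : ∀ v : V, p • v = 0) (hfaith : IsFaithful H V) (hirr : IsIrreducible H V)
    {W : AddSubgroup (Fin t → V)} (hmax : IsMaxHSub H W)
    (γ : H → Fin t → V) (hγ : ∀ h k : H, γ h + h • γ k - γ (h * k) ∈ W) :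
    ∃ v : Fin t → V, ∀ h : H, γ h - (h • v - v) ∈ W := by
  by_cases hH : Nontrivial H
  · obtain ⟨N, hNnormal, hNbot, hNp⟩ := exists_pprime_normal p hp helem hfaith hirr hH
    haveI : Fintype ↥N := Fintype.ofFinite ↥N
    set n := Nat.card ↥N with hn
    have hcop : Nat.Coprime n p := ((Nat.Prime.coprime_iff_not_dvd hp).2 hNp).symm
    obtain ⟨c, -, hc⟩ := Nat.exists_mul_mod_eq_one_of_coprime hcop hp.one_lt
    have psmul : ∀ x : Fin t → V, p • x = 0 := fun x => funext fun i => helem (x i)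
    have hncsmul : ∀ x : Fin t → V, (n * c) • x = x := by
      intro x
      have hdm := Nat.div_add_mod (n * c) p
      have h0 : n * c = (n * c / p) * p + 1 := by
        conv_lhs => rw [← Nat.div_add_mod (n * c) p]
        rw [hc, mul_comm]
      rw [h0, add_smul, one_smul, mul_smul, psmul, smul_zero, zero_add]
    set s : Fin t → V := ∑ m : ↥N, γ ↑m with hs
    have hsum : ∀ m ∈ N, n • γ m + m • s - s ∈ W := by
      intro m hm
      have h2 : (∑ x : ↥N, (γ m + m • γ ↑x - γ (m * ↑x))) ∈ W :=
        AddSubgroup.sum_mem W (fun x _ => hγ m ↑x)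
      have h3 : (∑ x : ↥N, γ (m * ↑x)) = s := by
        have h3' := Equiv.sum_comp (Equiv.mulLeft (⟨m, hm⟩ : ↥N)) (fun x : ↥N => γ ↑x)
        simpa using h3'
      have h4 : (∑ x : ↥N, (γ m + m • γ ↑x - γ (m * ↑x))) = n • γ m + m • s - s := by
        rw [Finset.sum_sub_distrib, Finset.sum_add_distrib, h3, ← Finset.smul_sum, ← hs,
          Finset.sum_const, Finset.card_univ, ← Nat.card_eq_fintype_card, ← hn]
      rwa [h4] at h2
    set v : Fin t → V := -(c • s) with hv
    have hswap : ∀ (g : H) (x : Fin t → V), g • (c • x) = c • (g • x) := by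
      intro g x
      exact AddMonoidHom.map_nsmul (DistribMulAction.toAddMonoidHom (Fin t → V) g) c x
    have hvN : ∀ m ∈ N, γ m - (m • v - v) ∈ W := by
      intro m hm
      have h5 : c • (n • γ m + m • s - s) ∈ W := AddSubgroup.nsmul_mem W (hsum m hm) c
      have h6 : c • (n • γ m + m • s - s) = γ m - (m • v - v) := by
        rw [hv, smul_neg, smul_sub, smul_add, smul_smul, mul_comm c n, hncsmul, ← hswap]
        abel
      rwa [h6] at h5
    refine ⟨v, ?_⟩
    set γ' : H → Fin t → V := fun h => γ h - (h • v - v) with hγ'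
    have hγ'c : ∀ g k : H, γ' g + g • γ' k - γ' (g * k) ∈ W := by
      intro g k
      have key : γ' g + g • γ' k - γ' (g * k) = γ g + g • γ k - γ (g * k) := by
        rw [hγ']
        simp only [smul_sub, mul_smul]
        abel
      rw [key]
      exact hγ g k
    intro h
    show γ' h ∈ W
    refine fixmodW hfaith hirr hmax hNnormal hNbot _ ?_
    intro n' hn'
    set m : H := h⁻¹ * n' * h with hmdef
    have hmN : m ∈ N := by
      have := hNnormal.conj_mem n' hn' h⁻¹
      rwa [inv_inv] at this
    have he : h * m = n' * h := by rw [hmdef]; group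
    have e1 : γ' h + h • γ' m - γ' (h * m) ∈ W := hγ'c h m
    have e2 : γ' n' + n' • γ' h - γ' (n' * h) ∈ W := hγ'c n' h
    have e3 : h • γ' m ∈ W := hmax.1 h _ (hvN m hmN)
    have e4 : γ' n' ∈ W := hvN n' hn'
    rw [he] at e1
    have key : n' • γ' h - γ' h =
        ((γ' n' + n' • γ' h - γ' (n' * h)) - γ' n'
          - (γ' h + h • γ' m - γ' (n' * h))) + h • γ' m := by
      abel
    rw [key]
    exact W.add_mem (W.sub_mem (W.sub_mem e2 e4) e1) e3
  · rw [not_nontrivial_iff_subsingleton] at hH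
    refine ⟨0, ?_⟩
    intro h
    have h1 : h = 1 := Subsingleton.elim h 1
    have h2 : γ 1 ∈ W := by
      have := hγ 1 1
      simpa using this
    rw [h1]
    simpa using h2

end Gaschutz

lemma mul_inv_mk' (a b : Fin t → V) (g : H) :
    mk' a g * (mk' b g)⁻¹ = mk' (a - b) 1 := by
  rw [mk'_inv, mk'_mul, mk'_eq_iff]
  constructor
  · rw [smul_neg, smul_inv_smul, sub_eq_add_neg]
  · group

lemma subG_normal (W' : AddSubgroup (Fin t → V)) (hW' : IsHSub H W') :
    (subG (H := H) W').Normal := by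
  constructor
  intro g hg x
  rw [mem_subG] at hg
  have h1 : x * g * x⁻¹ = mk' (x.right • g.left.toAdd) 1 := by
    conv_lhs => rw [eq_mk' x, eq_mk' g, hg.1]
    rw [conj_mk']
  rw [h1, mk'_mem_subG]
  exact hW' x.right _ hg.2

end Aux


/-- Let `G = V^t ⋊ H` be a finite solvable group, where `V` is a faithful
irreducible module for `H` over the prime field `𝔽_p`, and `H` acts diagonally
on `V^t`.  A subgroup `M` of `G` is maximal and satisfies `M·V^t = G` if and
only if `M = W·H^v` for some maximal `H`-submodule `W` of `V^t` and some
`v ∈ V^t`. -/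
theorem maximal_supplement_iff
    (p : ℕ) (hp : p.Prime) (V H : Type*) [AddCommGroup V] [Group H]
    [DistribMulAction H V] [Finite V] [Finite H] [Group.IsSolvable H]
    (helem : ∀ v : V, p • v = 0)
    (hfaith : IsFaithful H V) (hirr : IsIrreducible H V)
    (t : ℕ) (M : Subgroup (SDP V H t)) :
    (IsCoatom M ∧ M ⊔ VtG V H t = ⊤) ↔
      ∃ (W : AddSubgroup (Fin t → V)) (v : Fin t → V),
        IsMaxHSub H W ∧ M = subG W ⊔ HG V H t v := by
  constructor
  · rintro ⟨hco, hsup⟩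
    set W := pullW M with hWdef
    -- the projection of M to H is surjective
    have hsurj : ∀ h : H, ∃ a : Fin t → V, mk' a h ∈ M := by
      intro h
      have h3 : Subgroup.map (SemidirectProduct.rightHom : SDP V H t →* H) (VtG V H t) = ⊥ := by
        rw [eq_bot_iff]
        rintro x ⟨g, hg, rfl⟩
        exact (Subgroup.mem_bot).2 (mem_VtG.1 hg)
      have h4 : Subgroup.map (SemidirectProduct.rightHom : SDP V H t →* H) M = ⊤ := by
        have h5 := congrArg
          (Subgroup.map (SemidirectProduct.rightHom : SDP V H t →* H)) hsup
        rwa [Subgroup.map_sup, h3, sup_bot_eq, ← MonoidHom.range_eq_map,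
          MonoidHom.range_eq_top_of_surjective _ SemidirectProduct.rightHom_surjective] at h5
      have h6 : h ∈ Subgroup.map (SemidirectProduct.rightHom : SDP V H t →* H) M :=
        h4 ▸ Subgroup.mem_top h
      obtain ⟨g, hgM, hgr⟩ := h6
      exact ⟨g.left.toAdd, by rw [← hgr]; exact hgM⟩
    set γ : H → Fin t → V := fun h => Classical.choose (hsurj h) with hγdef
    have hγM : ∀ h : H, mk' (γ h) h ∈ M := fun h => Classical.choose_spec (hsurj h)
    -- W is an H-submodule
    have hWsub : IsHSub H W := by
      intro h a ha
      rw [hWdef, mem_pullW] at ha ⊢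
      have := M.mul_mem (M.mul_mem (hγM h) ha) (M.inv_mem (hγM h))
      rwa [conj_mk'] at this
    -- the cocycle identity mod W
    have hγW : ∀ h k : H, γ h + h • γ k - γ (h * k) ∈ W := by
      intro h k
      have := M.mul_mem (M.mul_mem (hγM h) (hγM k)) (M.inv_mem (hγM (h * k)))
      rwa [mk'_mul, mul_inv_mk'] at this
    -- W is proper
    have hWtop : W ≠ ⊤ := by
      intro he
      apply hco.1
      rw [eq_top_iff]
      intro g _
      have h1 : g.left.toAdd - γ g.right ∈ W := he ▸ AddSubgroup.mem_top _
      have h2 : g = mk' (g.left.toAdd - γ g.right) 1 * mk' (γ g.right) g.right := by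
        conv_lhs => rw [eq_mk' g]
        rw [mk'_mul, mk'_eq_iff]
        constructor
        · rw [one_smul]; abel
        · rw [one_mul]
      rw [h2]
      exact M.mul_mem h1 (hγM g.right)
    -- W is maximal
    have hWmax' : ∀ W' : AddSubgroup (Fin t → V), IsHSub H W' → W < W' → W' = ⊤ := by
      intro W' hW' hlt
      obtain ⟨a, haW', haW⟩ := SetLike.exists_of_lt hlt
      have hMK : M < M ⊔ subG W' := by
        refine lt_of_le_of_ne le_sup_left ?_
        intro he
        apply haW
        rw [hWdef, mem_pullW, he]
        exact Subgroup.mem_sup_right (mk'_mem_subG.2 haW')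
      have hKtop := hco.2 _ hMK
      haveI := subG_normal W' hW'
      rw [AddSubgroup.eq_top_iff']
      intro x
      have hx : mk' x (1 : H) ∈ M ⊔ subG W' := hKtop ▸ Subgroup.mem_top _
      have hx2 : (mk' x (1 : H) : SDP V H t) ∈
          ((M : Set (SDP V H t)) * ((subG (H := H) W') : Set (SDP V H t))) := by
        rw [← Subgroup.mul_normal M (subG (H := H) W')]
        exact hx
      obtain ⟨m, hm, b, hb, hmb⟩ := hx2
      replace hm : m ∈ M := hm
      replace hb := mem_subG.1 hb
      have hm' : m = mk' (x - b.left.toAdd) 1 := by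
        have : m = mk' x 1 * b⁻¹ := by rw [← hmb, mul_assoc, mul_inv_cancel, mul_one]
        rw [this]
        conv_lhs => rw [eq_mk' b, hb.1]
        rw [mul_inv_mk']
      have hxb : x - b.left.toAdd ∈ W := by
        rw [hWdef, mem_pullW, ← hm']
        exact hm
      have : x = (x - b.left.toAdd) + b.left.toAdd := by abel
      rw [this]
      exact W'.add_mem (hlt.le hxb) hb.2
    have hmax : IsMaxHSub H W := ⟨hWsub, hWtop, hWmax'⟩
    obtain ⟨v, hv⟩ := exists_coboundary hp helem hfaith hirr hmax γ hγW
    refine ⟨W, v, hmax, ?_⟩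
    rw [join_eq v W hmax.1]
    apply le_antisymm
    · intro g hg
      rw [mem_WHv]
      have h1 : g * (mk' (γ g.right) g.right)⁻¹ ∈ M := M.mul_mem hg (M.inv_mem (hγM _))
      rw [eq_mk' g] at h1
      simp only [mk'_right] at h1
      rw [mul_inv_mk'] at h1
      have h2 : g.left.toAdd - (g.right • v - v) =
          (g.left.toAdd - γ g.right) + (γ g.right - (g.right • v - v)) := by abel
      rw [h2]
      exact W.add_mem h1 (hv g.right)
    · intro g hg
      rw [mem_WHv] at hg
      have h1 : g.left.toAdd - γ g.right ∈ W := by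
        have h2 : g.left.toAdd - γ g.right =
            (g.left.toAdd - (g.right • v - v)) - (γ g.right - (g.right • v - v)) := by abel
        rw [h2]
        exact W.sub_mem hg (hv g.right)
      have h3 : g = mk' (g.left.toAdd - γ g.right) 1 * mk' (γ g.right) g.right := by
        conv_lhs => rw [eq_mk' g]
        rw [mk'_mul, mk'_eq_iff]
        constructor
        · rw [one_smul]; abel
        · rw [one_mul]
      rw [h3]
      exact M.mul_mem h1 (hγM g.right)
  · rintro ⟨W, v, hmax, rfl⟩
    rw [join_eq v W hmax.1]
    exact ⟨isCoatom_WHv W hmax v, WHv_sup_VtG v W hmax.1⟩
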